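/- Let t ∈ (0,1] and let k₁, k₂ ≥ 0 be integers. Then Σ_{r=0}^{k₁} Σ_{s=0}^{k₂} α^{(2k₁+1,t)}_{2k₁+1−2r} · α^{(2k₂+1,t)}_{2k₂+1−2s} · Σ_{l=1}^{min(k₁+1−r, k₂+1−s)} (2l−1) · binom(2(k₁−r)+1, k₁+1−r−l) · binom(2(k₂−s)+1, k₂+1−s−l) · t^{(k₁−r)+(k₂−s)−2l+2} equals 2k₁+1 if k₁ = k₂, and equals 0 if k₁ ≠ k₂. -/

import Mathlib

open Polynomial

/-- The modified Chebyshev polynomials: `P₀ = 2`, `P₁ = X`,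
`P_{k+2} = X·P_{k+1} − t·P_k`. -/
noncomputable def modCheb (t : ℝ) : ℕ → Polynomial ℝ
  | 0 => 2
  | 1 => Polynomial.X
  | (k + 2) => Polynomial.X * modCheb t (k + 1) - Polynomial.C t * modCheb t k

open Finset

lemma two_step {P : ℕ → Prop} (h0 : P 0) (h1 : P 1)
    (h : ∀ n, P n → P (n + 1) → P (n + 2)) : ∀ n, P n := by
  intro n
  induction n using Nat.strong_induction_on with
  | _ n ih =>
    match n with
    | 0 => exact h0
    | 1 => exact h1
    | (m + 2) => exact h m (ih m (by omega)) (ih (m + 1) (by omega))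

lemma modCheb_coeff_zero_of_gt (t : ℝ) : ∀ n, ∀ i, n < i → (modCheb t n).coeff i = 0 := by
  apply two_step
  · intro i hi
    simp only [modCheb]
    rw [(map_ofNat Polynomial.C 2).symm, coeff_C]
    simp; omega
  · intro i hi; simp [modCheb, coeff_X]; omega
  · intro n ih1 ih2 i hi
    simp only [modCheb, coeff_sub, coeff_C_mul]
    obtain ⟨j, rfl⟩ : ∃ j, i = j + 1 := ⟨i - 1, by omega⟩
    rw [coeff_X_mul, ih2 j (by omega), ih1 (j+1) (by omega)]
    ring

lemma modCheb_coeff_self (t : ℝ) : ∀ n, 0 < n → (modCheb t n).coeff n = 1 := by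
  have key : ∀ n, (modCheb t n).coeff n = if n = 0 then 2 else 1 := by
    apply two_step
    · rw [show (modCheb t 0) = Polynomial.C 2 from (map_ofNat Polynomial.C 2).symm]; simp
    · simp [modCheb]
    · intro n ih1 ih2
      simp only [modCheb, coeff_sub, coeff_C_mul]
      rw [show n + 2 = (n + 1) + 1 by ring, coeff_X_mul, ih2,
        modCheb_coeff_zero_of_gt t n (n + 1 + 1) (by omega)]
      simp
  intro n hn
  rw [key n]; simp; omega

lemma modCheb_coeff_parity (t : ℝ) : ∀ n, ∀ i, (n + i) % 2 = 1 → (modCheb t n).coeff i = 0 := by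
  apply two_step
  · intro i hi
    rw [show (modCheb t 0) = Polynomial.C 2 from (map_ofNat Polynomial.C 2).symm, coeff_C]
    simp; omega
  · intro i hi; simp [modCheb, coeff_X]; omega
  · intro n ih1 ih2 i hi
    simp only [modCheb, coeff_sub, coeff_C_mul]
    match i with
    | 0 => rw [coeff_zero_eq_eval_zero]; simp [ih1 0 (by omega)]
    | (j + 1) => rw [coeff_X_mul, ih2 j (by omega), ih1 (j + 1) (by omega)]; ring


lemma modCheb_eval (t z : ℝ) (hz : z ≠ 0) :
    ∀ n, eval (z + t / z) (modCheb t n) = z ^ n + (t / z) ^ n := by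
  apply two_step
  · simp [modCheb]; norm_num
  · simp [modCheb]
  · intro n ih1 ih2
    simp only [modCheb, eval_sub, eval_mul, eval_X, eval_C, ih1, ih2]
    linear_combination (t ^ (n + 1) * z⁻¹ ^ n + t * z ^ n) * mul_inv_cancel₀ hz


lemma modCheb_as_sum (t : ℝ) (k : ℕ) :
    modCheb t (2 * k + 1) = ∑ r ∈ range (k + 1),
      Polynomial.C ((modCheb t (2 * k + 1)).coeff (2 * k + 1 - 2 * r)) * X ^ (2 * k + 1 - 2 * r) := by
  ext n
  rw [finset_sum_coeff]
  simp only [coeff_C_mul, coeff_X_pow]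
  by_cases hn : n % 2 = 1 ∧ n ≤ 2 * k + 1
  · obtain ⟨h1, h2⟩ := hn
    rw [Finset.sum_eq_single ((2 * k + 1 - n) / 2)]
    · rw [if_pos (by omega), show 2 * k + 1 - 2 * ((2 * k + 1 - n) / 2) = n by omega, mul_one]
    · intro r hr hne
      simp only [mem_range] at hr
      rw [if_neg (by omega), mul_zero]
    · intro h
      exact absurd (Finset.mem_range.mpr (by omega)) h
  · have h0 : ∑ r ∈ range (k + 1), (modCheb t (2 * k + 1)).coeff (2 * k + 1 - 2 * r) *
        (if n = 2 * k + 1 - 2 * r then (1:ℝ) else 0) = 0 := by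
      apply Finset.sum_eq_zero
      intro r hr
      simp only [mem_range] at hr
      rw [if_neg (by omega), mul_zero]
    rw [h0]
    rcases Nat.lt_or_ge (2 * k + 1) n with h | h
    · exact modCheb_coeff_zero_of_gt t _ _ h
    · exact modCheb_coeff_parity t _ _ (by omega)


lemma binomial_split (z w : ℝ) (a : ℕ) :
    (z + w) ^ (2 * a + 1) = ∑ l ∈ range (a + 1),
      ((2 * a + 1).choose (a - l) : ℝ) * (z ^ (a + 1 + l) * w ^ (a - l) + z ^ (a - l) * w ^ (a + 1 + l)) := by
  rw [add_pow, show 2 * a + 1 + 1 = (a + 1) + (a + 1) by ring, Finset.sum_range_add]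
  rw [← Finset.sum_range_reflect (fun j => z ^ j * w ^ (2 * a + 1 - j) * ((2 * a + 1).choose j : ℝ)) (a + 1)]
  rw [← Finset.sum_add_distrib]
  apply Finset.sum_congr rfl
  intro l hl
  simp only [mem_range] at hl
  rw [show a + 1 - 1 - l = a - l by omega, show 2 * a + 1 - (a - l) = a + 1 + l by omega,
    show 2 * a + 1 - (a + 1 + l) = a - l by omega,
    show (2 * a + 1).choose (a + 1 + l) = (2 * a + 1).choose (a - l) by
      rw [← Nat.choose_symm (by omega)]; congr 1; omega]
  ring

lemma eval_split (t z : ℝ) (hz : z ≠ 0) (a : ℕ) :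
    (z + t / z) ^ (2 * a + 1) = ∑ l ∈ range (a + 1),
      ((2 * a + 1).choose (a - l) : ℝ) * t ^ (a - l) * (z ^ (2 * l + 1) + (t / z) ^ (2 * l + 1)) := by
  rw [binomial_split]
  apply Finset.sum_congr rfl
  intro l hl
  simp only [mem_range] at hl
  have h1 : z ^ (a + 1 + l) * (t / z) ^ (a - l) = t ^ (a - l) * z ^ (2 * l + 1) := by
    rw [show a + 1 + l = (2 * l + 1) + (a - l) by omega, pow_add, div_pow]
    field_simp
  have h2 : z ^ (a - l) * (t / z) ^ (a + 1 + l) = t ^ (a - l) * (t / z) ^ (2 * l + 1) := by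
    rw [show a + 1 + l = (2 * l + 1) + (a - l) by omega, pow_add (t / z), div_pow, div_pow]
    field_simp
  rw [h1, h2]
  ring

lemma X_pow_odd_eq (t : ℝ) (ht : 0 < t) (a : ℕ) :
    (X : ℝ[X]) ^ (2 * a + 1) = ∑ l ∈ range (a + 1),
      Polynomial.C (((2 * a + 1).choose (a - l) : ℝ) * t ^ (a - l)) * modCheb t (2 * l + 1) := by
  apply Polynomial.eq_of_infinite_eval_eq
  apply Set.Infinite.mono (s := Set.Ioi (2 * Real.sqrt t))
  swap
  · exact Set.Ioi_infinite _
  intro x hx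
  simp only [Set.mem_Ioi] at hx
  have hst : Real.sqrt t > 0 := Real.sqrt_pos.mpr ht
  have hx0 : 0 < x := lt_trans (by linarith) hx
  have hx2 : x ^ 2 - 4 * t ≥ 0 := by
    have : (2 * Real.sqrt t) ^ 2 < x ^ 2 := by
      apply pow_lt_pow_left₀ hx (by positivity)
      omega
    have h4 : (2 * Real.sqrt t) ^ 2 = 4 * t := by
      rw [mul_pow, Real.sq_sqrt ht.le]; ring
    linarith
  set s := Real.sqrt (x ^ 2 - 4 * t) with hs
  have hs2 : s ^ 2 = x ^ 2 - 4 * t := Real.sq_sqrt hx2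
  have hs0 : 0 ≤ s := Real.sqrt_nonneg _
  set z := (x + s) / 2 with hzdef
  have hz0 : 0 < z := by positivity
  have hzx : z + t / z = x := by
    field_simp
    nlinarith [hs2]
  simp only [Set.mem_setOf_eq]
  rw [← hzx, eval_pow, eval_X, eval_split t z hz0.ne' a, eval_finset_sum]
  apply Finset.sum_congr rfl
  intro l hl
  rw [eval_mul, eval_C, modCheb_eval t z hz0.ne']


lemma sum_range_ite {M : Type*} [AddCommMonoid M] (m n : ℕ) (hmn : m ≤ n) (F : ℕ → M) :
    ∑ l ∈ Finset.range n, (if l < m then F l else 0) = ∑ l ∈ Finset.range m, F l := by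
  rw [← Finset.sum_subset (Finset.range_subset_range.mpr hmn)]
  · exact Finset.sum_congr rfl fun l hl => if_pos (Finset.mem_range.mp hl)
  · intro l hl hlm
    simp only [Finset.mem_range] at hl hlm
    exact if_neg (by omega)

lemma tri_swap {M : Type*} [AddCommMonoid M] (k : ℕ) (F : ℕ → ℕ → M) :
    ∑ r ∈ Finset.range (k + 1), ∑ l ∈ Finset.range (k - r + 1), F r l
      = ∑ l ∈ Finset.range (k + 1), ∑ r ∈ Finset.range (k - l + 1), F r l := by
  have h1 : ∀ r ∈ Finset.range (k + 1), ∑ l ∈ Finset.range (k - r + 1), F r l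
      = ∑ l ∈ Finset.range (k + 1), (if l < k - r + 1 then F r l else 0) :=
    fun r hr => (sum_range_ite _ _ (by simp only [Finset.mem_range] at hr; omega) _).symm
  rw [Finset.sum_congr rfl h1, Finset.sum_comm]
  apply Finset.sum_congr rfl
  intro l hl
  simp only [Finset.mem_range] at hl
  have h2 : ∀ r ∈ Finset.range (k + 1), (if l < k - r + 1 then F r l else 0)
      = (if r < k - l + 1 then F r l else 0) := by
    intro r hr
    simp only [Finset.mem_range] at hr
    congr 1
    simp only [eq_iff_iff]
    omega
  rw [Finset.sum_congr rfl h2, sum_range_ite _ _ (by omega) _]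


noncomputable def dd (t : ℝ) (k l : ℕ) : ℝ :=
  ∑ r ∈ Finset.range (k - l + 1),
    (modCheb t (2 * k + 1)).coeff (2 * k + 1 - 2 * r) *
      (((2 * (k - r) + 1).choose (k - r - l) : ℝ) * t ^ (k - r - l))

lemma cheb_expand (t : ℝ) (ht : 0 < t) (k : ℕ) :
    modCheb t (2 * k + 1) = ∑ l ∈ range (k + 1), Polynomial.C (dd t k l) * modCheb t (2 * l + 1) := by
  conv_lhs => rw [modCheb_as_sum t k]
  have step : ∀ r ∈ range (k + 1),
      Polynomial.C ((modCheb t (2 * k + 1)).coeff (2 * k + 1 - 2 * r)) * X ^ (2 * k + 1 - 2 * r)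
      = ∑ l ∈ range (k - r + 1),
          Polynomial.C ((modCheb t (2 * k + 1)).coeff (2 * k + 1 - 2 * r) *
            (((2 * (k - r) + 1).choose (k - r - l) : ℝ) * t ^ (k - r - l))) * modCheb t (2 * l + 1) := by
    intro r hr
    simp only [mem_range] at hr
    rw [show 2 * k + 1 - 2 * r = 2 * (k - r) + 1 by omega, X_pow_odd_eq t ht (k - r),
      Finset.mul_sum]
    apply Finset.sum_congr rfl
    intro l hl
    rw [← mul_assoc, ← Polynomial.C_mul]
  rw [Finset.sum_congr rfl step, tri_swap]
  apply Finset.sum_congr rfl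
  intro l hl
  rw [dd, map_sum, Finset.sum_mul]

lemma cheb_indep (t : ℝ) : ∀ n (e : ℕ → ℝ),
    (∑ l ∈ range (n + 1), Polynomial.C (e l) * modCheb t (2 * l + 1)) = 0 → ∀ l ≤ n, e l = 0 := by
  intro n
  induction n with
  | zero =>
    intro e h l hl
    interval_cases l
    have := congrArg (fun p => Polynomial.coeff p 1) h
    simpa [modCheb_coeff_self t 1 (by omega), modCheb] using this
  | succ n ih =>
    intro e h l hl
    have htop : e (n + 1) = 0 := by
      have := congrArg (fun p => Polynomial.coeff p (2 * (n + 1) + 1)) h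
      simp only [finset_sum_coeff, coeff_C_mul, coeff_zero] at this
      rw [Finset.sum_eq_single (n + 1)] at this
      · rwa [modCheb_coeff_self t _ (by omega), mul_one] at this
      · intro l' hl' hne
        simp only [mem_range] at hl'
        rw [modCheb_coeff_zero_of_gt t _ _ (by omega), mul_zero]
      · intro habs
        exact absurd (mem_range.mpr (by omega)) habs
    rcases Nat.lt_or_ge l (n + 1) with hc | hc
    · apply ih e _ l (by omega)
      rw [Finset.sum_range_succ, htop] at h
      simpa using h
    · have : l = n + 1 := by omega
      rw [this]; exact htop

lemma dd_eq (t : ℝ) (ht : 0 < t) (k : ℕ) : ∀ l ≤ k, dd t k l = if l = k then 1 else 0 := by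
  intro l hl
  have h0 : ∑ l ∈ range (k + 1), Polynomial.C (dd t k l - if l = k then 1 else 0) * modCheb t (2 * l + 1) = 0 := by
    simp only [map_sub, sub_mul, Finset.sum_sub_distrib]
    rw [← cheb_expand t ht k]
    rw [sub_eq_zero]
    rw [Finset.sum_eq_single k]
    · simp
    · intro l' hl' hne
      rw [if_neg hne]; simp
    · intro habs; exact absurd (mem_range.mpr (by omega)) habs
  have := cheb_indep t k _ h0 l hl
  linarith [this]


lemma key (t : ℝ) (ht : 0 < t) (k l : ℕ) (h1 : 1 ≤ l) (h2 : l ≤ k + 1) :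
    (∑ r ∈ Finset.range (k + 1), if l + r ≤ k + 1 then
        (modCheb t (2 * k + 1)).coeff (2 * k + 1 - 2 * r) *
          (((2 * (k - r) + 1).choose (k + 1 - r - l) : ℝ) * t ^ (k + 1 - r - l)) else 0)
      = if l = k + 1 then 1 else 0 := by
  have hc : ∀ r ∈ Finset.range (k + 1),
      (if l + r ≤ k + 1 then
        (modCheb t (2 * k + 1)).coeff (2 * k + 1 - 2 * r) *
          (((2 * (k - r) + 1).choose (k + 1 - r - l) : ℝ) * t ^ (k + 1 - r - l)) else 0)
      = (if r < k + 2 - l then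
        (modCheb t (2 * k + 1)).coeff (2 * k + 1 - 2 * r) *
          (((2 * (k - r) + 1).choose (k + 1 - r - l) : ℝ) * t ^ (k + 1 - r - l)) else 0) := by
    intro r hr
    congr 1
    simp only [eq_iff_iff]
    omega
  rw [Finset.sum_congr rfl hc, sum_range_ite (k + 2 - l) (k + 1) (by omega) _]
  have := dd_eq t ht k (l - 1) (by omega)
  rw [dd, show k - (l - 1) + 1 = k + 2 - l by omega] at this
  rw [show (if l = k + 1 then (1:ℝ) else 0) = if l - 1 = k then 1 else 0 by congr 1; simp only [eq_iff_iff]; omega]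
  rw [← this]
  apply Finset.sum_congr rfl
  intro r hr
  simp only [Finset.mem_range] at hr
  rw [show k - r - (l - 1) = k + 1 - r - l by omega]

/-- For `t ∈ (0,1]` and integers `k₁, k₂ ≥ 0`,
`Σ_{r,s} α^{(2k₁+1,t)}_{2k₁+1−2r} α^{(2k₂+1,t)}_{2k₂+1−2s}
  Σ_{l≥1} (2l−1)·binom(2(k₁−r)+1, k₁+1−r−l)·binom(2(k₂−s)+1, k₂+1−s−l)·t^{(k₁−r)+(k₂−s)−2l+2}`
equals `2k₁+1` if `k₁ = k₂` and `0` otherwise. -/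
theorem stmt_19 (t : ℝ) (ht0 : 0 < t) (ht1 : t ≤ 1) (k₁ k₂ : ℕ) :
    ∑ r ∈ Finset.range (k₁ + 1), ∑ s ∈ Finset.range (k₂ + 1),
        (modCheb t (2 * k₁ + 1)).coeff (2 * k₁ + 1 - 2 * r) *
          (modCheb t (2 * k₂ + 1)).coeff (2 * k₂ + 1 - 2 * s) *
          ∑ l ∈ Finset.Icc 1 (min (k₁ + 1 - r) (k₂ + 1 - s)),
            (2 * l - 1 : ℝ) * ((2 * (k₁ - r) + 1).choose (k₁ + 1 - r - l) : ℝ) *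
              ((2 * (k₂ - s) + 1).choose (k₂ + 1 - s - l) : ℝ) *
              t ^ ((k₁ - r) + (k₂ - s) + 2 - 2 * l)
      = if k₁ = k₂ then (2 * k₁ + 1 : ℝ) else 0 := by
  set M := min (k₁ + 1) (k₂ + 1) with hM
  set α₁ : ℕ → ℝ := fun r => (modCheb t (2 * k₁ + 1)).coeff (2 * k₁ + 1 - 2 * r) with hα₁
  set α₂ : ℕ → ℝ := fun s => (modCheb t (2 * k₂ + 1)).coeff (2 * k₂ + 1 - 2 * s) with hα₂
  have step1 : ∀ r ∈ Finset.range (k₁ + 1), ∀ s ∈ Finset.range (k₂ + 1),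
      (∑ l ∈ Finset.Icc 1 (min (k₁ + 1 - r) (k₂ + 1 - s)),
        (2 * l - 1 : ℝ) * ((2 * (k₁ - r) + 1).choose (k₁ + 1 - r - l) : ℝ) *
          ((2 * (k₂ - s) + 1).choose (k₂ + 1 - s - l) : ℝ) *
          t ^ ((k₁ - r) + (k₂ - s) + 2 - 2 * l))
      = ∑ l ∈ Finset.Icc 1 M, (if l + r ≤ k₁ + 1 ∧ l + s ≤ k₂ + 1 then
          (2 * l - 1 : ℝ) * ((2 * (k₁ - r) + 1).choose (k₁ + 1 - r - l) : ℝ) *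
            ((2 * (k₂ - s) + 1).choose (k₂ + 1 - s - l) : ℝ) *
            t ^ ((k₁ - r) + (k₂ - s) + 2 - 2 * l) else 0) := by
    intro r hr s hs
    simp only [Finset.mem_range] at hr hs
    have hsub : Finset.Icc 1 (min (k₁ + 1 - r) (k₂ + 1 - s)) ⊆ Finset.Icc 1 M := by
      intro l hl
      simp only [Finset.mem_Icc, hM] at hl ⊢
      omega
    have hz : ∀ l ∈ Finset.Icc 1 M, l ∉ Finset.Icc 1 (min (k₁ + 1 - r) (k₂ + 1 - s)) →
        (if l + r ≤ k₁ + 1 ∧ l + s ≤ k₂ + 1 then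
          (2 * l - 1 : ℝ) * ((2 * (k₁ - r) + 1).choose (k₁ + 1 - r - l) : ℝ) *
            ((2 * (k₂ - s) + 1).choose (k₂ + 1 - s - l) : ℝ) *
            t ^ ((k₁ - r) + (k₂ - s) + 2 - 2 * l) else 0) = 0 := by
      intro l hl hnl
      simp only [Finset.mem_Icc] at hl hnl
      rw [if_neg (by omega)]
    rw [← Finset.sum_subset hsub hz]
    exact Finset.sum_congr rfl fun l hl => by
      simp only [Finset.mem_Icc] at hl
      rw [if_pos (by omega)]
  rw [Finset.sum_congr rfl (fun r hr => Finset.sum_congr rfl (fun s hs => by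
    rw [step1 r hr s hs]))]
  simp only [Finset.mul_sum, mul_ite, mul_zero]
  rw [Finset.sum_congr rfl (fun r _ => Finset.sum_comm), Finset.sum_comm]
  have step2 : ∀ l ∈ Finset.Icc 1 M,
      (∑ r ∈ Finset.range (k₁ + 1), ∑ s ∈ Finset.range (k₂ + 1),
        (if l + r ≤ k₁ + 1 ∧ l + s ≤ k₂ + 1 then
          α₁ r * α₂ s * ((2 * l - 1 : ℝ) * ((2 * (k₁ - r) + 1).choose (k₁ + 1 - r - l) : ℝ) *
            ((2 * (k₂ - s) + 1).choose (k₂ + 1 - s - l) : ℝ) *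
            t ^ ((k₁ - r) + (k₂ - s) + 2 - 2 * l)) else 0))
      = (2 * l - 1 : ℝ) * (if l = k₁ + 1 then 1 else 0) * (if l = k₂ + 1 then 1 else 0) := by
    intro l hl
    simp only [Finset.mem_Icc, hM] at hl
    have e1 : (∑ r ∈ Finset.range (k₁ + 1), ∑ s ∈ Finset.range (k₂ + 1),
        (if l + r ≤ k₁ + 1 ∧ l + s ≤ k₂ + 1 then
          α₁ r * α₂ s * ((2 * l - 1 : ℝ) * ((2 * (k₁ - r) + 1).choose (k₁ + 1 - r - l) : ℝ) *
            ((2 * (k₂ - s) + 1).choose (k₂ + 1 - s - l) : ℝ) *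
            t ^ ((k₁ - r) + (k₂ - s) + 2 - 2 * l)) else 0))
        = (2 * l - 1 : ℝ) *
          ((∑ r ∈ Finset.range (k₁ + 1), if l + r ≤ k₁ + 1 then
            α₁ r * (((2 * (k₁ - r) + 1).choose (k₁ + 1 - r - l) : ℝ) * t ^ (k₁ + 1 - r - l)) else 0) *
          (∑ s ∈ Finset.range (k₂ + 1), if l + s ≤ k₂ + 1 then
            α₂ s * (((2 * (k₂ - s) + 1).choose (k₂ + 1 - s - l) : ℝ) * t ^ (k₂ + 1 - s - l)) else 0)) := by
      rw [Finset.sum_mul_sum, Finset.mul_sum]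
      apply Finset.sum_congr rfl
      intro r hr
      rw [Finset.mul_sum]
      apply Finset.sum_congr rfl
      intro s hs
      simp only [Finset.mem_range] at hr hs
      by_cases hA : l + r ≤ k₁ + 1
      · by_cases hB : l + s ≤ k₂ + 1
        · rw [if_pos ⟨hA, hB⟩, if_pos hA, if_pos hB,
            show (k₁ - r) + (k₂ - s) + 2 - 2 * l = (k₁ + 1 - r - l) + (k₂ + 1 - s - l) by omega,
            pow_add]
          ring
        · rw [if_neg (by omega), if_neg hB]
          ring
      · rw [if_neg (by omega), if_neg hA]
        ring
    rw [e1, key t ht0 k₁ l (by omega) (by omega), key t ht0 k₂ l (by omega) (by omega)]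
    ring
  rw [Finset.sum_congr rfl step2]
  by_cases h : k₁ = k₂
  · subst h
    rw [if_pos rfl]
    rw [Finset.sum_eq_single (k₁ + 1)]
    · simp only [if_pos rfl, mul_one]
      push_cast
      ring
    · intro l hl hne
      simp [hne]
    · intro habs
      exact absurd (Finset.mem_Icc.mpr (by constructor <;> simp [hM]) ) habs
  · rw [if_neg h]
    apply Finset.sum_eq_zero
    intro l hl
    by_cases h1 : l = k₁ + 1
    · have h2 : ¬(l = k₂ + 1) := fun h2 => h (by omega)
      simp [h2]
    · simp [h1]
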